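/- Let α ≥ 0 and m > 0 be real numbers and define f(r) = (1/(2r))·(1 − α·(2/(1 + (2r/m)^α) − 1)) for r > 0. Then f(m/2) = 1/m and f'(r) + f(r)² = (α² − 1)/(4r²) for all r > 0. Moreover, for any R0 > 0, setting a0 = m/(2R0) and g(r) = a0·f(a0·r), the function g satisfies g(R0) = 1/(2R0) and g'(r) + g(r)² = (α² − 1)/(4r²) for all r > 0. -/

import Mathlib

/-- The explicit Riccati comparison function
f(r) = (1/(2r))·(1 − α·(2/(1 + (2r/m)^α) − 1)). -/
noncomputable def fRic (α m r : ℝ) : ℝ :=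
  (1 / (2 * r)) * (1 - α * (2 / (1 + (2 * r / m) ^ α) - 1))

lemma fRic_init (α m : ℝ) (hm : 0 < m) : fRic α m (m / 2) = 1 / m := by
  have : 2 * (m / 2) / m = 1 := by field_simp
  simp [fRic, this, Real.one_rpow]
  field_simp
  ring

lemma fRic_deriv (α m : ℝ) (hm : 0 < m) (r : ℝ) (hr : 0 < r) :
    HasDerivAt (fRic α m)
      ((α ^ 2 - 1) / (4 * r ^ 2) - (fRic α m r) ^ 2) r := by
  have hb : 0 < 2 * r / m := by positivity
  set u : ℝ := (2 * r / m) ^ α with hu_def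
  have hu : 0 < u := Real.rpow_pos_of_pos hb α
  have hA : (1 : ℝ) + u ≠ 0 := by positivity
  have hlin : HasDerivAt (fun s : ℝ => 2 * s / m) (2 / m) r := by
    simpa using ((hasDerivAt_id r).const_mul 2).div_const m
  have hU : HasDerivAt (fun s : ℝ => (2 * s / m) ^ α)
      (2 / m * α * (2 * r / m) ^ (α - 1)) r :=
    hlin.rpow_const (Or.inl hb.ne')
  have hval : 2 / m * α * (2 * r / m) ^ (α - 1) = α * u / r := by
    rw [Real.rpow_sub_one hb.ne', hu_def]
    field_simp
  rw [hval] at hU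
  have hdenom : HasDerivAt (fun s : ℝ => 1 + (2 * s / m) ^ α) (α * u / r) r := by
    exact hU.const_add 1
  have hinv : HasDerivAt (fun s : ℝ => 2 / (1 + (2 * s / m) ^ α))
      ((0 * (1 + u) - 2 * (α * u / r)) / (1 + u) ^ 2) r :=
    (hasDerivAt_const r (2 : ℝ)).div hdenom hA
  have hin : HasDerivAt (fun s : ℝ => 1 - α * (2 / (1 + (2 * s / m) ^ α) - 1))
      (-(α * ((0 * (1 + u) - 2 * (α * u / r)) / (1 + u) ^ 2))) r :=
    ((hinv.sub_const 1).const_mul α).const_sub 1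
  have h2s : HasDerivAt (fun s : ℝ => 2 * s) 2 r := by
    simpa using (hasDerivAt_id r).const_mul 2
  have hleft : HasDerivAt (fun s : ℝ => 1 / (2 * s))
      ((0 * (2 * r) - 1 * 2) / (2 * r) ^ 2) r :=
    (hasDerivAt_const r (1 : ℝ)).div h2s (by positivity)
  have hfull := hleft.mul hin
  have : fRic α m = fun s : ℝ =>
      (1 / (2 * s)) * (1 - α * (2 / (1 + (2 * s / m) ^ α) - 1)) := rfl
  rw [this]
  refine hfull.congr_deriv ?_
  beta_reduce
  rw [← hu_def]
  field_simp
  ring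

/-- f satisfies f(m/2) = 1/m and the Riccati equation
f' + f² = (α² − 1)/(4r²) for r > 0; moreover for any R0 > 0, with
a0 = m/(2R0), the rescaled function g(r) = a0·f(a0·r) satisfies
g(R0) = 1/(2R0) and g' + g² = (α² − 1)/(4r²) for r > 0. -/
theorem statement18 (α m : ℝ) (hα : 0 ≤ α) (hm : 0 < m) :
    fRic α m (m / 2) = 1 / m ∧
    (∀ r : ℝ, 0 < r →
      HasDerivAt (fRic α m)
        ((α ^ 2 - 1) / (4 * r ^ 2) - (fRic α m r) ^ 2) r) ∧
    (∀ R0 : ℝ, 0 < R0 →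
      (m / (2 * R0)) * fRic α m ((m / (2 * R0)) * R0) = 1 / (2 * R0) ∧
      ∀ r : ℝ, 0 < r →
        HasDerivAt (fun s => (m / (2 * R0)) * fRic α m ((m / (2 * R0)) * s))
          ((α ^ 2 - 1) / (4 * r ^ 2)
            - ((m / (2 * R0)) * fRic α m ((m / (2 * R0)) * r)) ^ 2) r) := by
  refine ⟨fRic_init α m hm, fun r hr => fRic_deriv α m hm r hr, fun R0 hR0 => ?_⟩
  set c : ℝ := m / (2 * R0) with hc_def
  have hc : 0 < c := by positivity
  have hcR0 : c * R0 = m / 2 := by rw [hc_def]; field_simp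
  constructor
  · rw [hcR0, fRic_init α m hm, hc_def]
    field_simp
  · intro r hr
    have hcr : 0 < c * r := by positivity
    have hmul : HasDerivAt (fun s : ℝ => c * s) c r := by
      simpa using (hasDerivAt_id r).const_mul c
    have hcomp := (fRic_deriv α m hm (c * r) hcr).comp r hmul
    have := hcomp.const_mul c
    refine this.congr_deriv ?_
    have : fRic α m (c * r) ^ 2 = (fRic α m (c * r)) ^ 2 := rfl
    field_simp
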